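/- Let n ≥ 2, let A be an invertible n×n real matrix, and let c ∈ ℝⁿ with first component c₁ ≠ 0. Let M = (I − (1/c₁) c e₁ᵀ) A and let M̃ be the lower-right (n−1)×(n−1) block of M. Then det(M̃) = (ρᵀ c) / c₁, where ρᵀ = e₁ᵀ adj(A). -/

import Mathlib

open Matrix

/-- The matrix `M = (I − (1/c₁) c e₁ᵀ) A`. -/
noncomputable def Mmat {n : ℕ} (A : Matrix (Fin (n + 2)) (Fin (n + 2)) ℝ)
    (c : Fin (n + 2) → ℝ) : Matrix (Fin (n + 2)) (Fin (n + 2)) ℝ :=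
  ((1 : Matrix (Fin (n + 2)) (Fin (n + 2)) ℝ)
      - (c 0)⁻¹ • Matrix.vecMulVec c (Pi.single 0 1)) * A

/-- `M̃`, the lower-right `(n−1)×(n−1)` block of `M`. -/
noncomputable def Mtilde {n : ℕ} (A : Matrix (Fin (n + 2)) (Fin (n + 2)) ℝ)
    (c : Fin (n + 2) → ℝ) : Matrix (Fin (n + 1)) (Fin (n + 1)) ℝ :=
  (Mmat A c).submatrix Fin.succ Fin.succ

/-- Lemma 5: `det(M̃) = (ρᵀ c)/c₁` where `ρᵀ = e₁ᵀ adj(A)`. -/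
theorem det_Mtilde_eq (n : ℕ) (A : Matrix (Fin (n + 2)) (Fin (n + 2)) ℝ)
    (c : Fin (n + 2) → ℝ) (hA : IsUnit A.det) (hc : c 0 ≠ 0) :
    (Mtilde A c).det = (A.adjugate.mulVec c) 0 / c 0 := by
  classical
  set t : ℝ := (c 0)⁻¹ with ht
  set c' : Fin (n + 2) → ℝ := fun i => if i = 0 then 0 else c i with hc'
  set E : Matrix (Fin (n + 2)) (Fin (n + 2)) ℝ :=
    1 - t • Matrix.vecMulVec c' (Pi.single 0 1) with hE
  set A' : Matrix (Fin (n + 2)) (Fin (n + 2)) ℝ := A.updateCol 0 c with hA'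
  -- E is lower triangular with unit diagonal
  have hEentry : ∀ i j, E i j
      = (if i = j then 1 else 0) - t * (c' i * (Pi.single 0 1 : Fin (n+2) → ℝ) j) := by
    intro i j
    simp [hE, Matrix.sub_apply, Matrix.one_apply, Matrix.vecMulVec_apply]
  have hEdet : E.det = 1 := by
    rw [Matrix.det_of_lowerTriangular]
    · refine Finset.prod_eq_one fun i _ => ?_
      rw [hEentry]
      rcases eq_or_ne i 0 with rfl | hi
      · simp [hc']
      · simp [Pi.single_apply, hi]
    · intro i j hij
      have hij' : i < j := hij
      have hj : j ≠ 0 := (lt_of_le_of_lt (Fin.zero_le i) hij').ne'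
      rw [hEentry]
      simp [Pi.single_apply, hj, hij'.ne]
  -- first column of E * A'
  have hcol : ∀ i, (E * A') i 0 = if i = 0 then c 0 else 0 := by
    intro i
    rw [Matrix.mul_apply]
    have : ∀ k, E i k * A' k 0 = E i k * c k := by
      intro k; simp [hA', Matrix.updateCol_apply]
    simp_rw [this]
    rcases eq_or_ne i 0 with rfl | hi
    · rw [Finset.sum_eq_single 0]
      · rw [hEentry]; simp [hc']
      · intro k _ hk
        rw [hEentry]
        simp [hc', hk.symm, Pi.single_apply, hk]
      · simp
    · have : ∀ k, E i k * c k =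
          (if i = k then c k else 0) - (if k = 0 then t * c i * c 0 else 0) := by
        intro k
        rw [hEentry]
        rcases eq_or_ne k 0 with rfl | hk
        · simp [hc', hi, Pi.single_apply]
          all_goals ring
        · simp [Pi.single_apply, hk]
      simp_rw [this, Finset.sum_sub_distrib]
      rw [Finset.sum_ite_eq (Finset.univ : Finset (Fin (n + 2))) i (fun k => c k),
        Finset.sum_ite_eq' (Finset.univ : Finset (Fin (n + 2))) 0
          (fun _ => t * c i * c 0)]
      rw [if_neg hi]
      simp only [Finset.mem_univ, if_true, ht]
      field_simp
      ring
  -- lower-right block of E * A' is Mtilde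
  have hblock : (E * A').submatrix Fin.succ Fin.succ = Mtilde A c := by
    ext i j
    simp only [Matrix.submatrix_apply, Mtilde, Mmat, Matrix.mul_apply]
    refine Finset.sum_congr rfl fun k _ => ?_
    have h1 : A' k j.succ = A k j.succ := by
      simp [hA', Matrix.updateCol_apply, (Fin.succ_ne_zero j)]
    rw [h1, hEentry]
    simp [Matrix.sub_apply, Matrix.one_apply, Matrix.vecMulVec_apply,
      Matrix.smul_apply, hc', Fin.succ_ne_zero i, ht]
  -- expand det (E * A') along the first column
  have hdet : (E * A').det = c 0 * (Mtilde A c).det := by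
    rw [Matrix.det_succ_column_zero]
    rw [Finset.sum_eq_single 0]
    · rw [hcol 0, if_pos rfl]
      rw [show ((0 : Fin (n + 2)).succAbove) = Fin.succ from funext fun i => rfl]
      rw [hblock]
      simp
    · intro k _ hk
      rw [hcol k, if_neg hk]
      ring
    · simp
  have hdet2 : (E * A').det = A'.det := by
    rw [Matrix.det_mul, hEdet, one_mul]
  have hcramer : A'.det = (A.adjugate.mulVec c) 0 := by
    rw [← Matrix.cramer_eq_adjugate_mulVec]
    simp [hA', Matrix.cramer_apply]
  rw [hdet] at hdet2
  rw [eq_div_iff hc, mul_comm]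
  exact hdet2.trans hcramer
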